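/- Invariance of non-buffer parameters under marginalization: let X be Markov with respect to a graph G = (V,E), M ⊆ V, and define the buffer B = {w ∈ M : ∃ w' ∉ M with (w,w') ∈ E}. If j is a cell with S(j) ⊆ M and S(j) ⊄ B, then the marginal log-linear parameter θ^M_j of the M-marginal distribution equals the joint parameter θ_j. In particular, if θ_j = 0 and S(j) ⊄ B then θ^M_j = 0. -/

import Mathlib

attribute [local instance] Classical.propDecidable

noncomputable def supp {V : Type*} [Fintype V] {I : V → Type*}
    (z : ∀ v, I v) (i : ∀ v, I v) : Finset V :=
  Finset.univ.filter (fun v => i v ≠ z v)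

/-- `tri z j i` is the relation `j ◁ i`. -/
def tri {V : Type*} {I : V → Type*} (z : ∀ v, I v) (j i : ∀ v, I v) : Prop :=
  ∀ v, j v ≠ z v → j v = i v

section AuxCombinatorics

lemma neg_one_pow_sub (a b : ℕ) (h : b ≤ a) : (-1:ℝ)^(a-b) = (-1)^a * (-1)^b := by
  have h1 : (-1:ℝ)^(a-b) * ((-1:ℝ)^b * (-1:ℝ)^b) = (-1:ℝ)^(a-b) := by
    rw [← mul_pow]; norm_num
  calc (-1:ℝ)^(a-b) = (-1:ℝ)^(a-b) * (-1:ℝ)^b * (-1:ℝ)^b := by rw [mul_assoc, h1]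
    _ = (-1:ℝ)^(a-b+b) * (-1:ℝ)^b := by rw [pow_add]
    _ = (-1)^a * (-1)^b := by rw [Nat.sub_add_cancel h]

lemma alt_sum0 {α : Type*} [DecidableEq α] (S : Finset α) :
    ∑ T ∈ S.powerset, (-1:ℝ)^(S.card - T.card) = if S = ∅ then 1 else 0 := by
  have h := Finset.sum_powerset_neg_one_pow_card (x := S)
  have h2 : ∑ T ∈ S.powerset, (-1:ℝ)^(S.card - T.card)
      = (-1:ℝ)^S.card * ∑ T ∈ S.powerset, (-1:ℝ)^T.card := by
    rw [Finset.mul_sum]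
    refine Finset.sum_congr rfl fun T hT => ?_
    exact neg_one_pow_sub _ _ (Finset.card_le_card (Finset.mem_powerset.1 hT))
  have h3 : ∑ T ∈ S.powerset, (-1:ℝ)^T.card = if S = ∅ then 1 else 0 := by
    have := congrArg (fun n : ℤ => (n : ℝ)) h
    push_cast at this
    simpa using this
  rw [h2, h3]
  by_cases hS : S = ∅ <;> simp [hS]

lemma alt_sum {α : Type*} [DecidableEq α] (S A : Finset α) (hA : A ⊆ S) :
    ∑ T ∈ S.powerset.filter (fun T => A ⊆ T), (-1:ℝ)^(S.card - T.card)
      = if A = S then 1 else 0 := by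
  have key : ∑ T ∈ S.powerset.filter (fun T => A ⊆ T), (-1:ℝ)^(S.card - T.card)
      = ∑ U ∈ (S \ A).powerset, (-1:ℝ)^((S \ A).card - U.card) := by
    refine Finset.sum_nbij' (fun T => T \ A) (fun U => A ∪ U) ?_ ?_ ?_ ?_ ?_
    · intro T hT
      simp only [Finset.mem_filter, Finset.mem_powerset] at hT ⊢
      exact Finset.sdiff_subset_sdiff hT.1 le_rfl
    · intro U hU
      simp only [Finset.mem_powerset] at hU
      simp only [Finset.mem_filter, Finset.mem_powerset]
      exact ⟨Finset.union_subset hA (hU.trans (Finset.sdiff_subset)), Finset.subset_union_left⟩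
    · intro T hT
      simp only [Finset.mem_filter, Finset.mem_powerset] at hT
      show A ∪ (T \ A) = T
      exact Finset.union_sdiff_of_subset hT.2
    · intro U hU
      simp only [Finset.mem_powerset] at hU
      show (A ∪ U) \ A = U
      rw [Finset.union_sdiff_cancel_left]
      exact Finset.disjoint_left.2 fun a haA haU => (Finset.mem_sdiff.1 (hU haU)).2 haA
    · intro T hT
      simp only [Finset.mem_filter, Finset.mem_powerset] at hT
      show (-1:ℝ)^(S.card - T.card) = (-1:ℝ)^((S \ A).card - (T \ A).card)
      congr 1
      have hc1 : (T \ A).card = T.card - A.card := Finset.card_sdiff_of_subset hT.2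
      have hc2 : (S \ A).card = S.card - A.card := Finset.card_sdiff_of_subset hA
      have h1 : A.card ≤ T.card := Finset.card_le_card hT.2
      have h2 : T.card ≤ S.card := Finset.card_le_card hT.1
      omega
  rw [key, alt_sum0]
  have heq : S \ A = ∅ ↔ A = S := by
    rw [Finset.sdiff_eq_empty_iff_subset]
    exact ⟨fun h => Finset.Subset.antisymm hA h, fun h => h ▸ le_rfl⟩
  by_cases h : A = S <;> simp [h, heq]

end AuxCombinatorics

set_option linter.unusedSectionVars false
set_option maxHeartbeats 1000000

section AuxCells
variable {V : Type*} [Fintype V] [DecidableEq V] {I : V → Type*} [∀ v, Fintype (I v)]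
  [∀ v, DecidableEq (I v)]

noncomputable def subcell (z j : ∀ v, I v) (T : Finset V) : ∀ v, I v :=
  fun v => if v ∈ T then j v else z v

lemma mem_supp {z i : ∀ v, I v} {v : V} : v ∈ supp z i ↔ i v ≠ z v := by
  simp [supp]

lemma supp_subcell (z j : ∀ v, I v) (T : Finset V) (hT : T ⊆ supp z j) :
    supp z (subcell z j T) = T := by
  ext v
  simp only [mem_supp, subcell]
  constructor
  · intro h; by_contra hv; simp [hv] at h
  · intro hv
    have := mem_supp.1 (hT hv)
    simp [hv, this]

lemma tri_refl (z j : ∀ v, I v) : tri z j j := fun _ _ => rfl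

lemma tri_subcell (z j : ∀ v, I v) (T : Finset V) : tri z (subcell z j T) j := by
  intro v hv
  simp only [subcell] at hv ⊢
  by_cases h : v ∈ T
  · simp [h]
  · simp [h] at hv

lemma supp_subset_of_tri {z k j : ∀ v, I v} (h : tri z k j) : supp z k ⊆ supp z j := by
  intro v hv
  rw [mem_supp] at hv ⊢
  rw [← h v hv]; exact hv

lemma subcell_supp_eq {z k j : ∀ v, I v} (h : tri z k j) : subcell z j (supp z k) = k := by
  funext v
  simp only [subcell, mem_supp]
  by_cases hv : k v = z v
  · simp [hv]
  · simp [hv, (h v hv).symm]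

lemma tri_subcell_iff (z k j : ∀ v, I v) (T : Finset V) :
    tri z k (subcell z j T) ↔ tri z k j ∧ supp z k ⊆ T := by
  constructor
  · intro h
    have hsub : supp z k ⊆ T := by
      intro v hv
      rw [mem_supp] at hv
      have h1 := h v hv
      simp only [subcell] at h1
      by_contra hvT
      rw [if_neg hvT] at h1; exact hv h1
    refine ⟨fun v hv => ?_, hsub⟩
    have h1 := h v hv
    have h2 : v ∈ T := hsub (mem_supp.2 hv)
    rwa [subcell, if_pos h2] at h1
  · rintro ⟨h1, h2⟩ v hv
    have hvT : v ∈ T := h2 (mem_supp.2 hv)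
    rw [subcell, if_pos hvT]
    exact h1 v hv

lemma tri_congr (z k i m : ∀ v, I v) (h : ∀ v ∈ supp z k, i v = m v) :
    tri z k i ↔ tri z k m := by
  constructor <;> intro ht v hv
  · exact (ht v hv).trans (h v (mem_supp.2 hv))
  · exact (ht v hv).trans (h v (mem_supp.2 hv)).symm

variable (z : ∀ v, I v) (G : SimpleGraph V) (θ : (∀ v, I v) → ℝ) (M : Finset V)

noncomputable def Sin (m : ∀ v, I v) : ℝ :=
  ∑ k ∈ Finset.univ.filter
      (fun k => (G.IsClique (↑(supp z k) : Set V) ∧ tri z k m) ∧ supp z k ⊆ M), θ k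

noncomputable def Sout (i : ∀ v, I v) : ℝ :=
  ∑ k ∈ Finset.univ.filter
      (fun k => (G.IsClique (↑(supp z k) : Set V) ∧ tri z k i) ∧ ¬ supp z k ⊆ M), θ k

noncomputable def Kf (m : ∀ v, I v) : ℝ :=
  ∑ i ∈ Finset.univ.filter (fun i => ∀ v ∈ M, i v = m v), Real.exp (Sout z G θ M i)

lemma sum_split (i : ∀ v, I v) :
    ∑ k ∈ Finset.univ.filter
        (fun k => G.IsClique (↑(supp z k) : Set V) ∧ tri z k i), θ k
      = Sin z G θ M i + Sout z G θ M i := by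
  have h := Finset.sum_filter_add_sum_filter_not
    (Finset.univ.filter (fun k => G.IsClique (↑(supp z k) : Set V) ∧ tri z k i))
    (fun k => supp z k ⊆ M) θ
  rw [Finset.filter_filter, Finset.filter_filter] at h
  rw [Sin, Sout, ← h]

lemma Sin_eq (i m : ∀ v, I v) (hM : ∀ v ∈ M, i v = m v) :
    Sin z G θ M i = Sin z G θ M m := by
  apply Finset.sum_congr _ (fun _ _ => rfl)
  apply Finset.filter_congr
  intro k _
  by_cases hk : supp z k ⊆ M
  · have : ∀ v ∈ supp z k, i v = m v := fun v hv => hM v (hk hv)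
    simp [tri_congr z k i m this]
  · simp [hk]

lemma Kf_pos (m : ∀ v, I v) : 0 < Kf z G θ M m := by
  apply Finset.sum_pos (fun i _ => Real.exp_pos _)
  exact ⟨m, by simp⟩

lemma Kf_congr (B : Finset V)
    (hcl : ∀ k : ∀ v, I v, G.IsClique (↑(supp z k) : Set V) → ¬ supp z k ⊆ M →
      ∀ v ∈ supp z k, v ∈ M → v ∈ B)
    (m m' : ∀ v, I v) (h : ∀ v ∈ B, m v = m' v) :
    Kf z G θ M m = Kf z G θ M m' := by
  rw [Kf, Kf]
  refine Finset.sum_nbij' (fun i => fun v => if v ∈ M then m' v else i v)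
    (fun i => fun v => if v ∈ M then m v else i v) ?_ ?_ ?_ ?_ ?_
  · intro i hi
    simp only [Finset.mem_filter, Finset.mem_univ, true_and] at *
    intro v hv; rw [if_pos hv]
  · intro i hi
    simp only [Finset.mem_filter, Finset.mem_univ, true_and] at *
    intro v hv; rw [if_pos hv]
  · intro i hi
    simp only [Finset.mem_filter, Finset.mem_univ, true_and] at hi
    funext v
    by_cases hv : v ∈ M
    · simp [hv, hi v hv]
    · simp [hv]
  · intro i hi
    simp only [Finset.mem_filter, Finset.mem_univ, true_and] at hi
    funext v
    by_cases hv : v ∈ M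
    · simp [hv, hi v hv]
    · simp [hv]
  · intro i hi
    simp only [Finset.mem_filter, Finset.mem_univ, true_and] at hi
    congr 1
    rw [Sout, Sout]
    apply Finset.sum_congr _ (fun _ _ => rfl)
    apply Finset.filter_congr
    intro k _
    by_cases hc : G.IsClique (↑(supp z k) : Set V)
    · by_cases hm : supp z k ⊆ M
      · simp [hm]
      · have hag : ∀ v ∈ supp z k, i v = (fun v => if v ∈ M then m' v else i v) v := by
          intro v hv
          by_cases hvM : v ∈ M
          · have hvB : v ∈ B := hcl k hc hm v hv hvM
            simp only [if_pos hvM]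
            rw [hi v hvM, h v hvB]
          · simp [hvM]
        simp [hc, hm, tri_congr z k _ _ hag]
    · simp [hc]

end AuxCells

/-- Invariance of non-buffer parameters under marginalization (Lemma 2 of the paper):
for a discrete graphical model Markov w.r.t. `G`, if `S(j) ⊆ M` and `S(j) ⊄ B`
where `B` is the buffer of `M`, then the marginal parameter `θ^M_j` equals `θ_j`.
In particular `θ_j = 0` implies `θ^M_j = 0` for such `j`. -/
theorem stmt6 {V : Type*} [Fintype V] [DecidableEq V]
    {I : V → Type*} [∀ v, Fintype (I v)] [∀ v, DecidableEq (I v)]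
    (z : ∀ v, I v)
    (G : SimpleGraph V)
    -- the joint loglinear parameters, supported on the cliques of G
    (θ : (∀ v, I v) → ℝ)
    (hθ : ∀ j, ¬ G.IsClique (↑(supp z j) : Set V) → θ j = 0)
    -- the joint probabilities
    (p : (∀ v, I v) → ℝ)
    (hp : ∀ i, p i =
      Real.exp (∑ j ∈ Finset.univ.filter
          (fun j => G.IsClique (↑(supp z j) : Set V) ∧ tri z j i), θ j) /
        ∑ i' : ∀ v, I v, Real.exp (∑ j ∈ Finset.univ.filter
          (fun j => G.IsClique (↑(supp z j) : Set V) ∧ tri z j i'), θ j))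
    (M : Finset V)
    -- the M-marginal probabilities
    (pM : (∀ v, I v) → ℝ)
    (hpM : ∀ m, pM m = ∑ i ∈ Finset.univ.filter (fun i => ∀ v ∈ M, i v = m v), p i)
    -- the M-marginal loglinear parameters, defined by Möbius inversion
    (θM : (∀ v, I v) → ℝ)
    (hθM : ∀ j, θM j =
      ∑ j' ∈ Finset.univ.filter (fun j' => tri z j' j ∧ supp z j' ⊆ M),
        (-1 : ℝ) ^ ((supp z j).card - (supp z j').card) * Real.log (pM j' / pM z))
    -- the buffer set of M
    (B : Finset V) (hB : B = M.filter (fun w => ∃ w' ∉ M, G.Adj w w'))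
    -- a cell supported in M but not in the buffer
    (j : ∀ v, I v) (hjM : supp z j ⊆ M) (hjB : ¬ supp z j ⊆ B) :
    θM j = θ j := by
  classical
  obtain ⟨u, huS, huB⟩ := Finset.not_subset.1 hjB
  -- cliques not contained in M meet M only inside the buffer B
  have hcl : ∀ k : ∀ v, I v, G.IsClique (↑(supp z k) : Set V) → ¬ supp z k ⊆ M →
      ∀ v ∈ supp z k, v ∈ M → v ∈ B := by
    intro k hc hm v hv hvM
    obtain ⟨w, hw, hwM⟩ := Finset.not_subset.1 hm
    have hne : v ≠ w := fun h => hwM (h ▸ hvM)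
    have hadj : G.Adj v w := hc (Finset.mem_coe.2 hv) (Finset.mem_coe.2 hw) hne
    rw [hB]
    exact Finset.mem_filter.2 ⟨hvM, ⟨w, hwM, hadj⟩⟩
  -- the normalizing constant
  set Z : ℝ := ∑ i' : ∀ v, I v, Real.exp (∑ k ∈ Finset.univ.filter
      (fun k => G.IsClique (↑(supp z k) : Set V) ∧ tri z k i'), θ k) with hZdef
  have hZ : 0 < Z := by
    rw [hZdef]
    exact Finset.sum_pos (fun i _ => Real.exp_pos _) ⟨z, Finset.mem_univ z⟩
  -- factorization of the marginal probabilities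
  have hfact : ∀ m, pM m = Real.exp (Sin z G θ M m) * Kf z G θ M m / Z := by
    intro m
    rw [hpM m]
    simp only [Kf]
    rw [Finset.mul_sum, Finset.sum_div]
    apply Finset.sum_congr rfl
    intro i hi
    simp only [Finset.mem_filter, Finset.mem_univ, true_and] at hi
    rw [hp i, sum_split z G θ M i, Sin_eq z G θ M i m hi, Real.exp_add]
  have hpMpos : ∀ m, 0 < pM m := by
    intro m
    rw [hfact m]
    exact div_pos (mul_pos (Real.exp_pos _) (Kf_pos z G θ M m)) hZ
  have hlog1 : ∀ m, Real.log (pM m) =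
      Sin z G θ M m + Real.log (Kf z G θ M m) - Real.log Z := by
    intro m
    rw [hfact m, Real.log_div (mul_pos (Real.exp_pos _) (Kf_pos z G θ M m)).ne' hZ.ne',
      Real.log_mul (Real.exp_ne_zero _) (Kf_pos z G θ M m).ne', Real.log_exp]
  have hlogpM : ∀ m, Real.log (pM m / pM z) =
      (Sin z G θ M m - Sin z G θ M z)
        + (Real.log (Kf z G θ M m) - Real.log (Kf z G θ M z)) := by
    intro m
    rw [Real.log_div (hpMpos m).ne' (hpMpos z).ne', hlog1 m, hlog1 z]
    ring
  rw [hθM j]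
  -- reindex the Möbius sum by subsets of the support of j
  have step1 : ∑ j' ∈ Finset.univ.filter (fun j' => tri z j' j ∧ supp z j' ⊆ M),
        (-1:ℝ)^((supp z j).card - (supp z j').card) * Real.log (pM j' / pM z)
      = ∑ T ∈ (supp z j).powerset,
        (-1:ℝ)^((supp z j).card - T.card) * Real.log (pM (subcell z j T) / pM z) := by
    refine Finset.sum_nbij' (fun j' => supp z j') (fun T => subcell z j T) ?_ ?_ ?_ ?_ ?_
    · intro j' hj'
      simp only [Finset.mem_filter, Finset.mem_univ, true_and] at hj'
      exact Finset.mem_powerset.2 (supp_subset_of_tri hj'.1)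
    · intro T hT
      have hTS := Finset.mem_powerset.1 hT
      simp only [Finset.mem_filter, Finset.mem_univ, true_and]
      refine ⟨tri_subcell z j T, ?_⟩
      rw [supp_subcell z j T hTS]
      exact hTS.trans hjM
    · intro j' hj'
      simp only [Finset.mem_filter, Finset.mem_univ, true_and] at hj'
      exact subcell_supp_eq hj'.1
    · intro T hT
      exact supp_subcell z j T (Finset.mem_powerset.1 hT)
    · intro j' hj'
      simp only [Finset.mem_filter, Finset.mem_univ, true_and] at hj'
      rw [subcell_supp_eq hj'.1]
  rw [step1]
  have step2 : ∑ T ∈ (supp z j).powerset,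
        (-1:ℝ)^((supp z j).card - T.card) * Real.log (pM (subcell z j T) / pM z)
      = (∑ T ∈ (supp z j).powerset, (-1:ℝ)^((supp z j).card - T.card)
            * (Sin z G θ M (subcell z j T) - Sin z G θ M z))
        + ∑ T ∈ (supp z j).powerset, (-1:ℝ)^((supp z j).card - T.card)
            * (Real.log (Kf z G θ M (subcell z j T)) - Real.log (Kf z G θ M z)) := by
    rw [← Finset.sum_add_distrib]
    apply Finset.sum_congr rfl
    intro T _
    rw [hlogpM (subcell z j T)]
    ring
  rw [step2]
  -- the buffer part vanishes by the involution toggling u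
  have part2 : ∑ T ∈ (supp z j).powerset, (-1:ℝ)^((supp z j).card - T.card)
      * (Real.log (Kf z G θ M (subcell z j T)) - Real.log (Kf z G θ M z)) = 0 := by
    refine Finset.sum_involution
      (fun T _ => if u ∈ T then T.erase u else insert u T) ?_ ?_ ?_ ?_
    · intro T hT
      have hTS := Finset.mem_powerset.1 hT
      set T' := if u ∈ T then T.erase u else insert u T with hT'
      have hagree : ∀ v ∈ B, subcell z j T v = subcell z j T' v := by
        intro v hvB
        have hvu : v ≠ u := fun h => huB (h ▸ hvB)
        have hmem : (v ∈ T) ↔ (v ∈ T') := by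
          rw [hT']
          by_cases hu : u ∈ T
          · rw [if_pos hu, Finset.mem_erase]
            exact ⟨fun h => ⟨hvu, h⟩, fun h => h.2⟩
          · rw [if_neg hu, Finset.mem_insert]
            exact ⟨Or.inr, fun h => h.elim (fun h' => absurd h' hvu) id⟩
        simp only [subcell]
        by_cases hv : v ∈ T
        · rw [if_pos hv, if_pos (hmem.1 hv)]
        · rw [if_neg hv, if_neg (fun h => hv (hmem.2 h))]
      have hK : Kf z G θ M (subcell z j T) = Kf z G θ M (subcell z j T') :=
        Kf_congr z G θ M B hcl _ _ hagree
      have hsign : (-1:ℝ)^((supp z j).card - T'.card)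
          = -(-1:ℝ)^((supp z j).card - T.card) := by
        have hTcard := Finset.card_le_card hTS
        rw [hT']
        by_cases hu : u ∈ T
        · rw [if_pos hu, Finset.card_erase_of_mem hu]
          have h1 : 1 ≤ T.card := Finset.card_pos.2 ⟨u, hu⟩
          have he : (supp z j).card - (T.card - 1) = ((supp z j).card - T.card) + 1 := by
            omega
          rw [he, pow_succ]; ring
        · rw [if_neg hu, Finset.card_insert_of_notMem hu]
          have hins : insert u T ⊆ supp z j := Finset.insert_subset huS hTS
          have h2 : T.card + 1 ≤ (supp z j).card := by
            have := Finset.card_le_card hins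
            rwa [Finset.card_insert_of_notMem hu] at this
          have he : (supp z j).card - T.card = ((supp z j).card - (T.card + 1)) + 1 := by
            omega
          rw [he, pow_succ]; ring
      rw [hK, hsign]
      ring
    · intro T hT _
      by_cases hu : u ∈ T
      · rw [if_pos hu]
        exact fun h => (Finset.erase_eq_self.1 h) hu
      · rw [if_neg hu]
        exact fun h => hu (h ▸ Finset.mem_insert_self u T)
    · intro T hT
      have hTS := Finset.mem_powerset.1 hT
      by_cases hu : u ∈ T
      · rw [if_pos hu]
        exact Finset.mem_powerset.2 ((Finset.erase_subset _ _).trans hTS)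
      · rw [if_neg hu]
        exact Finset.mem_powerset.2 (Finset.insert_subset huS hTS)
    · intro T hT
      by_cases hu : u ∈ T
      · rw [if_pos hu, if_neg (Finset.notMem_erase u T), Finset.insert_erase hu]
      · rw [if_neg hu, if_pos (Finset.mem_insert_self u T), Finset.erase_insert hu]
  -- the interior part gives θ j by Möbius inversion
  have part1 : ∑ T ∈ (supp z j).powerset, (-1:ℝ)^((supp z j).card - T.card)
      * (Sin z G θ M (subcell z j T) - Sin z G θ M z) = θ j := by
    set C := Finset.univ.filter
      (fun k : ∀ v, I v => (G.IsClique (↑(supp z k) : Set V) ∧ tri z k j) ∧ supp z k ⊆ M)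
      with hC
    have hSin : ∀ T ∈ (supp z j).powerset, Sin z G θ M (subcell z j T)
        = ∑ k ∈ C, (if supp z k ⊆ T then θ k else 0) := by
      intro T _
      rw [Sin, ← Finset.sum_filter, hC, Finset.filter_filter]
      apply Finset.sum_congr _ (fun _ _ => rfl)
      apply Finset.filter_congr
      intro k _
      rw [tri_subcell_iff z k j T]
      tauto
    have hsum0 : ∑ T ∈ (supp z j).powerset, (-1:ℝ)^((supp z j).card - T.card) = 0 := by
      rw [alt_sum0, if_neg (Finset.ne_empty_of_mem huS)]
    have e1 : ∑ T ∈ (supp z j).powerset, (-1:ℝ)^((supp z j).card - T.card)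
          * (Sin z G θ M (subcell z j T) - Sin z G θ M z)
        = (∑ T ∈ (supp z j).powerset, ∑ k ∈ C,
              (-1:ℝ)^((supp z j).card - T.card) * (if supp z k ⊆ T then θ k else 0))
          - (∑ T ∈ (supp z j).powerset, (-1:ℝ)^((supp z j).card - T.card))
              * Sin z G θ M z := by
      rw [Finset.sum_mul, ← Finset.sum_sub_distrib]
      apply Finset.sum_congr rfl
      intro T hT
      rw [hSin T hT, mul_sub, Finset.mul_sum]
    rw [e1, hsum0, zero_mul, sub_zero, Finset.sum_comm]
    have e2 : ∀ k ∈ C, ∑ T ∈ (supp z j).powerset,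
          (-1:ℝ)^((supp z j).card - T.card) * (if supp z k ⊆ T then θ k else 0)
        = θ k * (if supp z k = supp z j then 1 else 0) := by
      intro k hk
      simp only [hC, Finset.mem_filter, Finset.mem_univ, true_and] at hk
      have hkS : supp z k ⊆ supp z j := supp_subset_of_tri hk.1.2
      calc ∑ T ∈ (supp z j).powerset,
            (-1:ℝ)^((supp z j).card - T.card) * (if supp z k ⊆ T then θ k else 0)
          = ∑ T ∈ (supp z j).powerset,
            (if supp z k ⊆ T then (-1:ℝ)^((supp z j).card - T.card) * θ k else 0) := by
            apply Finset.sum_congr rfl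
            intro T _
            by_cases h : supp z k ⊆ T <;> simp [h]
        _ = ∑ T ∈ (supp z j).powerset.filter (fun T => supp z k ⊆ T),
            (-1:ℝ)^((supp z j).card - T.card) * θ k := (Finset.sum_filter _ _).symm
        _ = (∑ T ∈ (supp z j).powerset.filter (fun T => supp z k ⊆ T),
            (-1:ℝ)^((supp z j).card - T.card)) * θ k := by rw [Finset.sum_mul]
        _ = (if supp z k = supp z j then 1 else 0) * θ k := by
            rw [alt_sum (supp z j) (supp z k) hkS]
        _ = θ k * (if supp z k = supp z j then 1 else 0) := by ring
    rw [Finset.sum_congr rfl e2]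
    have e3 : ∑ k ∈ C.filter (fun k => supp z k = supp z j), θ k
        = ∑ k ∈ C, θ k * (if supp z k = supp z j then 1 else 0) := by
      rw [Finset.sum_filter]
      apply Finset.sum_congr rfl
      intro k _
      by_cases h : supp z k = supp z j <;> simp [h]
    rw [← e3]
    have e4 : C.filter (fun k => supp z k = supp z j)
        = if G.IsClique (↑(supp z j) : Set V) then {j} else ∅ := by
      ext k
      simp only [hC, Finset.filter_filter, Finset.mem_filter, Finset.mem_univ, true_and]
      constructor
      · rintro ⟨⟨⟨hcq, ht⟩, _⟩, hsupp⟩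
        have hkj : k = j := by
          have h1 := subcell_supp_eq ht
          have h2 := subcell_supp_eq (tri_refl z j)
          rw [hsupp] at h1
          rw [← h1, h2]
        subst hkj
        rw [if_pos (hsupp ▸ hcq)]
        exact Finset.mem_singleton_self k
      · intro hk
        by_cases hcq : G.IsClique (↑(supp z j) : Set V)
        · rw [if_pos hcq] at hk
          have hkj : k = j := Finset.mem_singleton.1 hk
          subst hkj
          exact ⟨⟨⟨hcq, tri_refl z k⟩, hjM⟩, rfl⟩
        · rw [if_neg hcq] at hk
          exact absurd hk (Finset.notMem_empty k)
    rw [e4]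
    by_cases hcq : G.IsClique (↑(supp z j) : Set V)
    · rw [if_pos hcq, Finset.sum_singleton]
    · rw [if_neg hcq, Finset.sum_empty, hθ j hcq]
  rw [part1, part2, add_zero]
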